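/- For all real numbers a, b > 0 with a ≠ b and all v ∈ (0,1), one has a♯_v b ≤ ((a∇_v b)·(a♯_v b))^{1/2} ≤ I_v(a,b). -/

import Mathlib

/-- The logarithmic mean of two positive reals. -/
noncomputable def logMean (a b : ℝ) : ℝ :=
  if a = b then a else (b - a) / (Real.log b - Real.log a)

/-- The identric mean of two positive reals. -/
noncomputable def idMean (a b : ℝ) : ℝ :=
  if a = b then a else Real.exp (-1) * (b ^ b / a ^ a) ^ (b - a)⁻¹

/-- The weighted arithmetic mean `a ∇_v b`. -/
def wArith (v a b : ℝ) : ℝ := (1 - v) * a + v * b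

/-- The weighted geometric mean `a ♯_v b`. -/
noncomputable def wGeom (v a b : ℝ) : ℝ := a ^ (1 - v) * b ^ v

/-- The weighted harmonic mean `a !_v b`. -/
noncomputable def wHarm (v a b : ℝ) : ℝ := ((1 - v) / a + v / b)⁻¹

/-- The weighted logarithmic mean `L_v(a,b)` (for `a ≠ b`, `v ∈ (0,1)`). -/
noncomputable def wLog (v a b : ℝ) : ℝ :=
  (1 / (Real.log a - Real.log b)) *
    (((1 - v) / v) * (a - a ^ (1 - v) * b ^ v) + (v / (1 - v)) * (a ^ (1 - v) * b ^ v - b))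

/-- The weighted identric mean `I_v(a,b)` (for `a ≠ b`, `v ∈ (0,1)`). -/
noncomputable def wId (v a b : ℝ) : ℝ :=
  Real.exp (-1) * wArith v a b ^ ((1 - 2 * v) * wArith v a b / (v * (1 - v) * (b - a))) *
    (b ^ (v * b / (1 - v)) / a ^ ((1 - v) * a / v)) ^ (b - a)⁻¹

lemma base_ineq {t : ℝ} (ht : 1 < t) : 2 * (t - 1) ≤ (t + 1) * Real.log t := by
  set g : ℝ → ℝ := fun x => (x + 1) * Real.log x - 2 * (x - 1) with hg
  have hderiv : ∀ x : ℝ, 0 < x → HasDerivAt g (Real.log x + (x + 1) * x⁻¹ - 2) x := by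
    intro x hx0
    have h1 : HasDerivAt (fun x : ℝ => (x + 1) * Real.log x)
        (1 * Real.log x + (x + 1) * x⁻¹) x :=
      ((hasDerivAt_id x).add_const 1).mul (Real.hasDerivAt_log hx0.ne')
    have h2 : HasDerivAt (fun x : ℝ => 2 * (x - 1)) (2 * 1) x :=
      ((hasDerivAt_id x).sub_const 1).const_mul 2
    have := h1.sub h2
    exact this.congr_deriv (by ring)
  have hmono : MonotoneOn g (Set.Ici (1:ℝ)) := by
    apply monotoneOn_of_deriv_nonneg (convex_Ici 1)
    · intro x hx
      have hx0 : (0:ℝ) < x := lt_of_lt_of_le one_pos (Set.mem_Ici.mp hx)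
      exact ((hderiv x hx0).continuousAt).continuousWithinAt
    · intro x hx
      rw [interior_Ici] at hx
      have hx0 : (0:ℝ) < x := lt_trans one_pos hx
      exact ((hderiv x hx0).differentiableAt).differentiableWithinAt
    · intro x hx
      rw [interior_Ici] at hx
      have hx0 : (0:ℝ) < x := lt_trans one_pos hx
      rw [(hderiv x hx0).deriv]
      have hlog : Real.log x⁻¹ ≤ x⁻¹ - 1 := Real.log_le_sub_one_of_pos (inv_pos.mpr hx0)
      rw [Real.log_inv] at hlog
      have hinv : (x + 1) * x⁻¹ = 1 + x⁻¹ := by field_simp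
      rw [hinv]
      linarith
  have h0 : g 1 ≤ g t := hmono (Set.mem_Ici.mpr le_rfl) (Set.mem_Ici.mpr ht.le) ht.le
  have hg1 : g 1 = 0 := by simp [hg]
  have hgt : g t = (t + 1) * Real.log t - 2 * (t - 1) := rfl
  rw [hg1, hgt] at h0
  linarith

lemma key_lt {x y : ℝ} (hx : 0 < x) (h : x < y) :
    (Real.log x + Real.log y) / 2 + 1 ≤ (y * Real.log y - x * Real.log x) / (y - x) := by
  have hy : 0 < y := lt_trans hx h
  have hb := base_ineq (t := y / x) ((one_lt_div hx).mpr h)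
  rw [Real.log_div hy.ne' hx.ne'] at hb
  have hb2 : 2 * (y - x) ≤ (y + x) * (Real.log y - Real.log x) := by
    have h3 := mul_le_mul_of_nonneg_left hb hx.le
    have l1 : x * (2 * (y / x - 1)) = 2 * (y - x) := by field_simp
    have l2 : x * ((y / x + 1) * (Real.log y - Real.log x))
        = (y + x) * (Real.log y - Real.log x) := by field_simp
    rw [l1, l2] at h3
    exact h3
  rw [le_div_iff₀ (by linarith : (0:ℝ) < y - x)]
  nlinarith [hb2]

lemma key_ineq {x y : ℝ} (hx : 0 < x) (hy : 0 < y) (hxy : x ≠ y) :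
    (Real.log x + Real.log y) / 2 + 1 ≤ (y * Real.log y - x * Real.log x) / (y - x) := by
  rcases hxy.lt_or_gt with h | h
  · exact key_lt hx h
  · have := key_lt hy h
    have heq : (x * Real.log x - y * Real.log y) / (x - y)
        = (y * Real.log y - x * Real.log x) / (y - x) := by
      rw [div_eq_div_iff (sub_ne_zero.mpr (ne_of_gt h)) (sub_ne_zero.mpr (ne_of_lt h))]
      ring
    rw [heq] at this
    linarith

/-- `a♯_v b ≤ ((a∇_v b)(a♯_v b))^{1/2} ≤ I_v(a,b)`. -/
theorem wGeom_le_wId_refinement (a b v : ℝ) (ha : 0 < a) (hb : 0 < b) (hab : a ≠ b)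
    (hv : v ∈ Set.Ioo (0 : ℝ) 1) :
    wGeom v a b ≤ (wArith v a b * wGeom v a b) ^ ((1 : ℝ) / 2) ∧
      (wArith v a b * wGeom v a b) ^ ((1 : ℝ) / 2) ≤ wId v a b := by
  obtain ⟨hv0, hv1⟩ := hv
  have h1v : (0:ℝ) < 1 - v := by linarith
  have hba : b - a ≠ 0 := sub_ne_zero.mpr (Ne.symm hab)
  have hA : 0 < wArith v a b := add_pos (mul_pos h1v ha) (mul_pos hv0 hb)
  have hG : 0 < wGeom v a b :=
    mul_pos (Real.rpow_pos_of_pos ha _) (Real.rpow_pos_of_pos hb _)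
  have hGA : wGeom v a b ≤ wArith v a b := by
    have := Real.geom_mean_le_arith_mean2_weighted h1v.le hv0.le ha.le hb.le (by ring)
    simpa [wGeom, wArith] using this
  constructor
  · -- first inequality
    have e1 : (wGeom v a b * wGeom v a b) ^ ((1:ℝ)/2) = wGeom v a b := by
      have h2 : wGeom v a b * wGeom v a b = wGeom v a b ^ (2:ℝ) := by
        rw [show (2:ℝ) = ((2:ℕ):ℝ) from by norm_num, Real.rpow_natCast]; ring
      rw [h2, ← Real.rpow_mul hG.le]
      norm_num
    calc wGeom v a b = (wGeom v a b * wGeom v a b) ^ ((1:ℝ)/2) := e1.symm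
      _ ≤ (wArith v a b * wGeom v a b) ^ ((1:ℝ)/2) :=
        Real.rpow_le_rpow (by positivity)
          (mul_le_mul_of_nonneg_right hGA hG.le) (by norm_num)
  · -- second inequality
    have hP : 0 < (wArith v a b * wGeom v a b) ^ ((1:ℝ)/2) :=
      Real.rpow_pos_of_pos (mul_pos hA hG) _
    have hX : 0 < b ^ (v * b / (1 - v)) / a ^ ((1 - v) * a / v) :=
      div_pos (Real.rpow_pos_of_pos hb _) (Real.rpow_pos_of_pos ha _)
    have hI : 0 < wId v a b :=
      mul_pos (mul_pos (Real.exp_pos _) (Real.rpow_pos_of_pos hA _))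
        (Real.rpow_pos_of_pos hX _)
    rw [← Real.log_le_log_iff hP hI]
    have hlogG : Real.log (wGeom v a b) = (1 - v) * Real.log a + v * Real.log b := by
      rw [wGeom, Real.log_mul (Real.rpow_pos_of_pos ha _).ne' (Real.rpow_pos_of_pos hb _).ne',
        Real.log_rpow ha, Real.log_rpow hb]
    have hlogP : Real.log ((wArith v a b * wGeom v a b) ^ ((1:ℝ)/2)) =
        (1/2) * (Real.log (wArith v a b) + ((1 - v) * Real.log a + v * Real.log b)) := by
      rw [Real.log_rpow (mul_pos hA hG), Real.log_mul hA.ne' hG.ne', hlogG]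
    have hlogI : Real.log (wId v a b) =
        -1 + ((1 - 2 * v) * wArith v a b / (v * (1 - v) * (b - a))) * Real.log (wArith v a b)
          + (b - a)⁻¹ * (v * b / (1 - v) * Real.log b - (1 - v) * a / v * Real.log a) := by
      rw [wId, Real.log_mul (by positivity) (Real.rpow_pos_of_pos hX _).ne',
        Real.log_mul (Real.exp_pos _).ne' (Real.rpow_pos_of_pos hA _).ne',
        Real.log_exp, Real.log_rpow hA, Real.log_rpow hX,
        Real.log_div (Real.rpow_pos_of_pos hb _).ne' (Real.rpow_pos_of_pos ha _).ne',
        Real.log_rpow hb, Real.log_rpow ha]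
    rw [hlogP, hlogI]
    -- key inequalities
    have hAa : a ≠ wArith v a b := by
      intro h
      apply hba
      have : wArith v a b - a = v * (b - a) := by rw [wArith]; ring
      rw [← h] at this
      simp at this
      rcases this with h' | h'
      · exact absurd h' hv0.ne'
      · linarith
    have hAb : wArith v a b ≠ b := by
      intro h
      apply hba
      have : b - wArith v a b = (1 - v) * (b - a) := by rw [wArith]; ring
      rw [h] at this
      simp at this
      rcases this with h' | h'
      · exact absurd h' h1v.ne'
      · linarith
    have K1 := key_ineq ha hA hAa
    have K2 := key_ineq hA hb hAb
    have eA1 : wArith v a b - a = v * (b - a) := by rw [wArith]; ring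
    have eA2 : b - wArith v a b = (1 - v) * (b - a) := by rw [wArith]; ring
    rw [eA1] at K1
    rw [eA2] at K2
    have C1 := mul_le_mul_of_nonneg_left K1 h1v.le
    have C2 := mul_le_mul_of_nonneg_left K2 hv0.le
    have hid : (1 - v) * ((wArith v a b * Real.log (wArith v a b) - a * Real.log a)
          / (v * (b - a)))
        + v * ((b * Real.log b - wArith v a b * Real.log (wArith v a b))
          / ((1 - v) * (b - a)))
        = ((1 - 2 * v) * wArith v a b / (v * (1 - v) * (b - a))) * Real.log (wArith v a b)
          + (b - a)⁻¹ * (v * b / (1 - v) * Real.log b - (1 - v) * a / v * Real.log a) := by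
      field_simp
      ring
    have hsum := add_le_add C1 C2
    rw [hid] at hsum
    linarith
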